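/- (Consensus under mean estimation in the limit of full platform susceptibility.) Suppose α_i ∈ (0,1) for all i ∈ V′, and β_i = 1 for all i ∈ {1,…,n}. Then for every innate opinion vector x* ∈ [0,1]^n the mean-estimation dynamics converge to a limit x_PS which is a consensus: there exists c ∈ [0,1] such that (x_PS)_i = c for all i ∈ {1,…,n}. -/

import Mathlib

open Matrix Filter Topology

namespace ConsensusAux
variable {N : ℕ}
lemma mulVec_apply' (Q : Matrix (Fin N) (Fin N) ℝ) (v : Fin N → ℝ) (i : Fin N) :
    (Q *ᵥ v) i = ∑ j, Q i j * v j := rfl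
lemma mul_nonneg_entries {A B : Matrix (Fin N) (Fin N) ℝ}
    (hA : ∀ i j, 0 ≤ A i j) (hB : ∀ i j, 0 ≤ B i j) : ∀ i j, 0 ≤ (A * B) i j := by
  intro i j
  rw [Matrix.mul_apply]
  exact Finset.sum_nonneg fun l _ => mul_nonneg (hA i l) (hB l j)
lemma pow_nonneg_entries {A : Matrix (Fin N) (Fin N) ℝ} (hA : ∀ i j, 0 ≤ A i j) :
    ∀ m i j, 0 ≤ (A ^ m) i j := by
  intro m
  induction m with
  | zero =>
      intro i j
      rw [pow_zero]
      by_cases h : i = j <;> simp [Matrix.one_apply, h]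
  | succ m ih =>
      intro i j
      rw [pow_succ]
      exact mul_nonneg_entries ih hA i j
lemma mul_rowsum {A B : Matrix (Fin N) (Fin N) ℝ}
    (hA : ∀ i, ∑ j, A i j = 1) (hB : ∀ i, ∑ j, B i j = 1) (i : Fin N) :
    ∑ j, (A * B) i j = 1 := by
  simp only [Matrix.mul_apply]
  rw [Finset.sum_comm]
  calc ∑ l, ∑ j, A i l * B l j = ∑ l, A i l * ∑ j, B l j := by
        simp [Finset.mul_sum]
    _ = ∑ l, A i l := Finset.sum_congr rfl fun l _ => by rw [hB l, mul_one]
    _ = 1 := hA i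
lemma pow_rowsum {A : Matrix (Fin N) (Fin N) ℝ} (hA : ∀ i, ∑ j, A i j = 1) :
    ∀ m i, ∑ j, (A ^ m) i j = 1 := by
  intro m
  induction m with
  | zero =>
      intro i
      rw [pow_zero]
      simp [Matrix.one_apply]
  | succ m ih =>
      intro i
      rw [pow_succ]
      exact mul_rowsum ih hA i
lemma pow_pos_step {A : Matrix (Fin N) (Fin N) ℝ} (hA : ∀ i j, 0 ≤ A i j)
    {m : ℕ} {a b c : Fin N} (hab : 0 < A a b) (hbc : 0 < (A ^ m) b c) :
    0 < (A ^ (m + 1)) a c := by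
  rw [pow_succ', Matrix.mul_apply]
  have h1 : A a b * (A ^ m) b c ≤ ∑ l, A a l * (A ^ m) l c :=
    Finset.single_le_sum
      (fun l _ => mul_nonneg (hA a l) (pow_nonneg_entries hA m l c))
      (Finset.mem_univ b)
  exact lt_of_lt_of_le (mul_pos hab hbc) h1
lemma mulVec_le_of_rowsum (Q : Matrix (Fin N) (Fin N) ℝ)
    (hQ0 : ∀ i j, 0 ≤ Q i j) (hQ1 : ∀ i, ∑ j, Q i j = 1)
    {v : Fin N → ℝ} {s : ℝ} (hv : ∀ j, v j ≤ s) (i : Fin N) :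
    (Q *ᵥ v) i ≤ s := by
  rw [mulVec_apply']
  calc ∑ j, Q i j * v j ≤ ∑ j, Q i j * s :=
        Finset.sum_le_sum fun j _ => mul_le_mul_of_nonneg_left (hv j) (hQ0 i j)
    _ = s := by rw [← Finset.sum_mul, hQ1 i, one_mul]
lemma le_mulVec_of_rowsum (Q : Matrix (Fin N) (Fin N) ℝ)
    (hQ0 : ∀ i j, 0 ≤ Q i j) (hQ1 : ∀ i, ∑ j, Q i j = 1)
    {v : Fin N → ℝ} {s : ℝ} (hv : ∀ j, s ≤ v j) (i : Fin N) :
    s ≤ (Q *ᵥ v) i := by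
  rw [mulVec_apply']
  calc s = ∑ j, Q i j * s := by rw [← Finset.sum_mul, hQ1 i, one_mul]
    _ ≤ ∑ j, Q i j * v j :=
        Finset.sum_le_sum fun j _ => mul_le_mul_of_nonneg_left (hv j) (hQ0 i j)
lemma mulVec_le_contract (Q : Matrix (Fin N) (Fin N) ℝ)
    (hQ0 : ∀ i j, 0 ≤ Q i j) (hQ1 : ∀ i, ∑ j, Q i j = 1)
    {v : Fin N → ℝ} {s δ : ℝ} {j0 : Fin N} (hv : ∀ j, v j ≤ s)
    (i : Fin N) (hδ : δ ≤ Q i j0) :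
    (Q *ᵥ v) i ≤ s - δ * (s - v j0) := by
  rw [mulVec_apply']
  have key : ∑ j, Q i j * (v j - s) ≤ Q i j0 * (v j0 - s) := by
    rw [← Finset.add_sum_erase _ _ (Finset.mem_univ j0)]
    have h0 : ∑ j ∈ Finset.univ.erase j0, Q i j * (v j - s) ≤ 0 :=
      Finset.sum_nonpos fun j _ =>
        mul_nonpos_of_nonneg_of_nonpos (hQ0 i j) (sub_nonpos.2 (hv j))
    linarith
  have h2 : Q i j0 * (v j0 - s) ≤ δ * (v j0 - s) :=
    mul_le_mul_of_nonpos_right hδ (sub_nonpos.2 (hv j0))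
  have expand : ∑ j, Q i j * (v j - s) = (∑ j, Q i j * v j) - s := by
    simp only [mul_sub]
    rw [Finset.sum_sub_distrib, ← Finset.sum_mul, hQ1 i, one_mul]
  have hring : δ * (v j0 - s) = -(δ * (s - v j0)) := by ring
  linarith
lemma le_mulVec_contract (Q : Matrix (Fin N) (Fin N) ℝ)
    (hQ0 : ∀ i j, 0 ≤ Q i j) (hQ1 : ∀ i, ∑ j, Q i j = 1)
    {v : Fin N → ℝ} {s δ : ℝ} {j0 : Fin N} (hv : ∀ j, s ≤ v j)
    (i : Fin N) (hδ : δ ≤ Q i j0) :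
    s + δ * (v j0 - s) ≤ (Q *ᵥ v) i := by
  have h := mulVec_le_contract Q hQ0 hQ1 (v := -v) (s := -s) (δ := δ) (j0 := j0)
    (fun j => by simpa using neg_le_neg (hv j)) i hδ
  rw [Matrix.mulVec_neg] at h
  have hj0 : (-v) j0 = -(v j0) := rfl
  rw [hj0] at h
  simp only [Pi.neg_apply] at h ⊢
  linarith
end ConsensusAux

open ConsensusAux

/-- Row-normalized adjacency matrix `W = deg⁻¹ A` of a simple graph. -/
noncomputable def rowNormAdj {n : ℕ} (G : SimpleGraph (Fin n)) [DecidableRel G.Adj] :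
    Matrix (Fin n) (Fin n) ℝ :=
  Matrix.of fun i j => (G.adjMatrix ℝ) i j / (G.degree i : ℝ)

/-- The multi-step influence matrix
`Ψ_K = Σ_{k=0}^{K−1} (Λ_α W)^k (I − Λ_α) + (Λ_α W)^K`. -/
noncomputable def Psi {n : ℕ} (K : ℕ) (α : Fin n → ℝ) (W : Matrix (Fin n) (Fin n) ℝ) :
    Matrix (Fin n) (Fin n) ℝ :=
  (∑ k ∈ Finset.range K, (Matrix.diagonal α * W) ^ k * (1 - Matrix.diagonal α))
    + (Matrix.diagonal α * W) ^ K

/-- The mean-estimation predictor: identity on the observed set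
`V′ = {i : i < n′}`, and the mean over `V′` for unobserved individuals. -/
noncomputable def meanM (n nP : ℕ) : Matrix (Fin n) (Fin n) ℝ :=
  Matrix.of fun i j =>
    if (i : ℕ) < nP then (if i = j then (1 : ℝ) else 0)
    else if (j : ℕ) < nP then (1 : ℝ) / nP else 0

/-- consensus under mean estimation with full platform
susceptibility `β_i = 1`: the mean-estimation dynamics converge to a consensus
`c·1` with `c ∈ [0,1]`. -/
theorem consensus_mean_estimation_full_susceptibility {n : ℕ} (hn : 2 ≤ n)
    (G : SimpleGraph (Fin n)) [DecidableRel G.Adj] (hG : G.Connected)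
    (nP : ℕ) (hnP1 : 1 ≤ nP) (hnPn : nP ≤ n)
    (hsub : (G.induce {i : Fin n | (i : ℕ) < nP}).Connected)
    (K : ℕ) (hK : 1 ≤ K)
    (α β : Fin n → ℝ) (hα : ∀ i, α i ∈ Set.Icc (0 : ℝ) 1)
    (hαV : ∀ i : Fin n, (i : ℕ) < nP → α i ∈ Set.Ioo (0 : ℝ) 1)
    (hβ : ∀ i, β i = 1)
    (xstar : Fin n → ℝ) (hx : ∀ i, xstar i ∈ Set.Icc (0 : ℝ) 1)
    (x : ℕ → Fin n → ℝ) (hx0 : x 0 = xstar)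
    (hrec : ∀ t, x (t + 1) = Psi K α (rowNormAdj G) *ᵥ
      ((1 - Matrix.diagonal β) *ᵥ xstar + Matrix.diagonal β *ᵥ (meanM n nP *ᵥ x t))) :
    ∃ xPS : Fin n → ℝ, Tendsto x atTop (𝓝 xPS) ∧
      ∃ c ∈ Set.Icc (0 : ℝ) 1, ∀ i, xPS i = c := by
  classical
  -- degrees are positive
  have hdeg : ∀ v : Fin n, 0 < G.degree v := by
    intro v
    rw [G.degree_pos_iff_exists_adj]
    obtain ⟨w, hw⟩ := Fintype.exists_ne_of_one_lt_card (by rw [Fintype.card_fin]; omega) v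
    obtain ⟨p⟩ := hG.preconnected v w
    cases p with
    | nil => exact absurd rfl hw
    | cons h _ => exact ⟨_, h⟩
  set W : Matrix (Fin n) (Fin n) ℝ := rowNormAdj G with hWdef
  have hWapp : ∀ i j, W i j = (G.adjMatrix ℝ) i j / (G.degree i : ℝ) := fun i j => rfl
  have hW0 : ∀ i j, 0 ≤ W i j := by
    intro i j
    rw [hWapp]
    apply div_nonneg _ (Nat.cast_nonneg _)
    simp [SimpleGraph.adjMatrix_apply]
    split_ifs <;> norm_num
  have hadjsum : ∀ i : Fin n, ∑ j, (G.adjMatrix ℝ) i j = (G.degree i : ℝ) := by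
    intro i
    have h := SimpleGraph.adjMatrix_mulVec_const_apply (G := G) (α := ℝ) (a := (1:ℝ)) (v := i)
    simpa [Matrix.mulVec, dotProduct] using h
  have hWrow : ∀ i, ∑ j, W i j = 1 := by
    intro i
    have hd : (G.degree i : ℝ) ≠ 0 := by
      exact_mod_cast (hdeg i).ne'
    simp only [hWapp]
    rw [← Finset.sum_div, hadjsum, div_self hd]
  have hWadj : ∀ i j, G.Adj i j → 0 < W i j := by
    intro i j h
    rw [hWapp]
    apply div_pos _ (by exact_mod_cast hdeg i)
    simp [SimpleGraph.adjMatrix_apply, h]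
  -- the matrix A = Λ_α W
  set A : Matrix (Fin n) (Fin n) ℝ := Matrix.diagonal α * W with hAdef
  have hAapp : ∀ i j, A i j = α i * W i j := fun i j => Matrix.diagonal_mul α W i j
  have hA0 : ∀ i j, 0 ≤ A i j := by
    intro i j
    rw [hAapp]
    exact mul_nonneg (hα i).1 (hW0 i j)
  have hArow : ∀ i, ∑ j, A i j = α i := by
    intro i
    simp only [hAapp]
    rw [← Finset.mul_sum, hWrow i, mul_one]
  -- diagonal difference
  have hD : (1 : Matrix (Fin n) (Fin n) ℝ) - Matrix.diagonal α
      = Matrix.diagonal (fun i => 1 - α i) := by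
    rw [← Matrix.diagonal_one, Matrix.diagonal_sub]
  have hD0 : ∀ i j, 0 ≤ ((1 : Matrix (Fin n) (Fin n) ℝ) - Matrix.diagonal α) i j := by
    intro i j
    rw [hD]
    rcases eq_or_ne i j with rfl | h
    · rw [Matrix.diagonal_apply_eq]
      linarith [(hα i).2]
    · rw [Matrix.diagonal_apply_ne _ h]
  -- entries of Psi
  have hΨapp : ∀ i j, Psi K α W i j
      = (∑ k ∈ Finset.range K, (A ^ k * ((1:Matrix (Fin n) (Fin n) ℝ) - Matrix.diagonal α)) i j)
        + (A ^ K) i j := by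
    intro i j
    rw [Psi]
    rw [Matrix.add_apply, Matrix.sum_apply]
  have hΨ0 : ∀ i j, 0 ≤ Psi K α W i j := by
    intro i j
    rw [hΨapp]
    have h1 : ∀ k ∈ Finset.range K,
        0 ≤ (A ^ k * ((1:Matrix (Fin n) (Fin n) ℝ) - Matrix.diagonal α)) i j := fun k _ =>
      mul_nonneg_entries (pow_nonneg_entries hA0 k) hD0 i j
    have h2 : 0 ≤ (A ^ K) i j := pow_nonneg_entries hA0 K i j
    exact add_nonneg (Finset.sum_nonneg h1) h2
  -- row sums of Psi are 1
  have hu : ∀ k i, ∑ j, (A ^ (k+1)) i j = ∑ l, (A ^ k) i l * α l := by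
    intro k i
    rw [pow_succ]
    simp only [Matrix.mul_apply]
    rw [Finset.sum_comm]
    refine Finset.sum_congr rfl fun l _ => ?_
    rw [← Finset.mul_sum, hArow l]
  have hterm : ∀ k i, ∑ j, (A ^ k * ((1:Matrix (Fin n) (Fin n) ℝ) - Matrix.diagonal α)) i j
      = (∑ j, (A ^ k) i j) - ∑ j, (A ^ (k+1)) i j := by
    intro k i
    rw [hu k i, hD]
    have : ∀ j, (A ^ k * Matrix.diagonal (fun i => 1 - α i)) i j = (A ^ k) i j * (1 - α j) :=
      fun j => Matrix.mul_diagonal _ _ i j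
    simp only [this, mul_sub, mul_one]
    rw [Finset.sum_sub_distrib]
  have hΨrow : ∀ i, ∑ j, Psi K α W i j = 1 := by
    intro i
    simp only [hΨapp]
    rw [Finset.sum_add_distrib]
    rw [Finset.sum_comm]
    have : ∑ k ∈ Finset.range K, ∑ j, (A ^ k * ((1:Matrix (Fin n) (Fin n) ℝ) - Matrix.diagonal α)) i j
        = (∑ j, (A ^ 0) i j) - ∑ j, (A ^ K) i j := by
      rw [← Finset.sum_range_sub' (fun k => ∑ j, (A ^ k) i j) K]
      exact Finset.sum_congr rfl fun k _ => hterm k i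
    rw [this]
    have h0 : ∑ j, (A ^ 0) i j = 1 := by
      rw [pow_zero]
      simp [Matrix.one_apply]
    rw [h0]
    ring
  -- lower bounds on Psi entries
  have hΨdiag : ∀ i, 1 - α i ≤ Psi K α W i i := by
    intro i
    rw [hΨapp]
    have h2 : 0 ≤ (A ^ K) i i := pow_nonneg_entries hA0 K i i
    have hterm0 : (A ^ 0 * ((1:Matrix (Fin n) (Fin n) ℝ) - Matrix.diagonal α)) i i = 1 - α i := by
      rw [pow_zero, one_mul, hD, Matrix.diagonal_apply_eq]
    have hle : (A ^ 0 * ((1:Matrix (Fin n) (Fin n) ℝ) - Matrix.diagonal α)) i i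
        ≤ ∑ k ∈ Finset.range K, (A ^ k * ((1:Matrix (Fin n) (Fin n) ℝ) - Matrix.diagonal α)) i i :=
      Finset.single_le_sum
        (fun k _ => mul_nonneg_entries (pow_nonneg_entries hA0 k) hD0 i i)
        (Finset.mem_range.2 hK)
    linarith [hterm0 ▸ hle]
  have hΨadj : ∀ i j : Fin n, (i:ℕ) < nP → (j:ℕ) < nP → G.Adj i j → 0 < Psi K α W i j := by
    intro i j hi hj hadj
    have hαi := hαV i hi
    have hαj := hαV j hj
    have hAij : 0 < A i j := by
      rw [hAapp]
      exact mul_pos hαi.1 (hWadj i j hadj)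
    rw [hΨapp]
    rcases eq_or_lt_of_le hK with hK1 | hK2
    · -- K = 1 : use the final term (A^1) i j
      have : 0 < (A ^ K) i j := by
        rw [← hK1, pow_one]
        exact hAij
      have hsum : 0 ≤ ∑ k ∈ Finset.range K,
          (A ^ k * ((1:Matrix (Fin n) (Fin n) ℝ) - Matrix.diagonal α)) i j :=
        Finset.sum_nonneg fun k _ =>
          mul_nonneg_entries (pow_nonneg_entries hA0 k) hD0 i j
      linarith
    · -- K ≥ 2 : use the k = 1 term
      have h1term : (A ^ 1 * ((1:Matrix (Fin n) (Fin n) ℝ) - Matrix.diagonal α)) i j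
          = A i j * (1 - α j) := by
        rw [pow_one, hD, Matrix.mul_diagonal]
      have hpos : 0 < (A ^ 1 * ((1:Matrix (Fin n) (Fin n) ℝ) - Matrix.diagonal α)) i j := by
        rw [h1term]
        exact mul_pos hAij (by linarith [hαj.2])
      have hle : (A ^ 1 * ((1:Matrix (Fin n) (Fin n) ℝ) - Matrix.diagonal α)) i j
          ≤ ∑ k ∈ Finset.range K, (A ^ k * ((1:Matrix (Fin n) (Fin n) ℝ) - Matrix.diagonal α)) i j :=
        Finset.single_le_sum
          (fun k _ => mul_nonneg_entries (pow_nonneg_entries hA0 k) hD0 i j)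
          (Finset.mem_range.2 hK2)
      have h2 : 0 ≤ (A ^ K) i j := pow_nonneg_entries hA0 K i j
      linarith
  -- facts about meanM
  have hnPpos : (0:ℝ) < (nP:ℝ) := by exact_mod_cast hnP1
  have hMapp : ∀ i j, meanM n nP i j = if (i : ℕ) < nP then (if i = j then (1 : ℝ) else 0)
      else if (j : ℕ) < nP then (1 : ℝ) / nP else 0 := fun i j => rfl
  have hM0 : ∀ i j, 0 ≤ meanM n nP i j := by
    intro i j
    rw [hMapp]
    split_ifs <;> positivity
  have hMcard : (Finset.univ.filter (fun j : Fin n => (j:ℕ) < nP)).card = nP := by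
    have hbij : (Finset.univ.filter (fun j : Fin n => (j:ℕ) < nP)).card
        = (Finset.range nP).card := by
      apply Finset.card_bij (fun (j : Fin n) _ => (j : ℕ))
      · intro a ha
        simp only [Finset.mem_filter] at ha
        exact Finset.mem_range.2 ha.2
      · intro a ha b hb hab
        exact Fin.ext hab
      · intro b hb
        refine ⟨⟨b, lt_of_lt_of_le (Finset.mem_range.1 hb) hnPn⟩, ?_, rfl⟩
        simp [Finset.mem_range.1 hb]
    rw [hbij, Finset.card_range]
  have hMrow : ∀ i, ∑ j, meanM n nP i j = 1 := by
    intro i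
    simp only [hMapp]
    by_cases hi : (i : ℕ) < nP
    · simp [hi]
    · simp only [hi, if_false]
      rw [Finset.sum_ite, Finset.sum_const, Finset.sum_const, hMcard]
      simp only [smul_zero, add_zero, nsmul_eq_mul]
      field_simp
  have hMdiag : ∀ j : Fin n, (j:ℕ) < nP → meanM n nP j j = 1 := by
    intro j hj
    rw [hMapp]
    simp [hj]
  have hMcol0 : ∀ i j : Fin n, nP ≤ (j:ℕ) → meanM n nP i j = 0 := by
    intro i j hj
    rw [hMapp]
    by_cases hi : (i:ℕ) < nP
    · have : i ≠ j := by
        intro h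
        rw [h] at hi
        omega
      simp [hi, this]
    · simp [hi, Nat.not_lt.2 hj]
  -- the transition matrix P
  set P : Matrix (Fin n) (Fin n) ℝ := Psi K α W * meanM n nP with hPdef
  have hP0 : ∀ i j, 0 ≤ P i j := mul_nonneg_entries hΨ0 hM0
  have hProw : ∀ i, ∑ j, P i j = 1 := mul_rowsum hΨrow hMrow
  have hPcol0 : ∀ i j : Fin n, nP ≤ (j:ℕ) → P i j = 0 := by
    intro i j hj
    rw [hPdef, Matrix.mul_apply]
    exact Finset.sum_eq_zero fun l _ => by rw [hMcol0 l j hj, mul_zero]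
  have hPgeΨ : ∀ i j : Fin n, (j:ℕ) < nP → Psi K α W i j ≤ P i j := by
    intro i j hj
    rw [hPdef, Matrix.mul_apply]
    have hjj : Psi K α W i j * meanM n nP j j = Psi K α W i j := by
      rw [hMdiag j hj, mul_one]
    calc Psi K α W i j = Psi K α W i j * meanM n nP j j := hjj.symm
      _ ≤ ∑ l, Psi K α W i l * meanM n nP l j :=
          Finset.single_le_sum
            (fun l _ => mul_nonneg (hΨ0 i l) (hM0 l j)) (Finset.mem_univ j)
  have hPexists : ∀ i : Fin n, ∃ j : Fin n, (j:ℕ) < nP ∧ 0 < P i j := by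
    intro i
    by_contra hcon
    push_neg at hcon
    have hall : ∀ j : Fin n, P i j ≤ 0 := by
      intro j
      by_cases hj : (j:ℕ) < nP
      · exact hcon j hj
      · rw [hPcol0 i j (Nat.not_lt.1 hj)]
    have : ∑ j, P i j ≤ 0 := Finset.sum_nonpos fun j _ => hall j
    rw [hProw i] at this
    linarith
  -- the designated observed vertex
  have h0n : 0 < n := by omega
  set v0 : Fin n := ⟨0, h0n⟩ with hv0def
  have hv0P : (v0 : ℕ) < nP := hnP1
  have hPdiagpos : ∀ j : Fin n, (j:ℕ) < nP → 0 < P j j := by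
    intro j hj
    have := hαV j hj
    have h1 := hΨdiag j
    have h2 := hPgeΨ j j hj
    linarith [this.2]
  have hPadjpos : ∀ i j : Fin n, (i:ℕ) < nP → (j:ℕ) < nP → G.Adj i j → 0 < P i j := by
    intro i j hi hj hadj
    exact lt_of_lt_of_le (hΨadj i j hi hj hadj) (hPgeΨ i j hj)
  -- base positivity at v0
  have hbase : ∀ m : ℕ, 0 < (P ^ m) v0 v0 := by
    intro m
    induction m with
    | zero =>
        rw [pow_zero]
        simp [Matrix.one_apply]
    | succ m ih => exact pow_pos_step hP0 (hPdiagpos v0 hv0P) ih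
  -- positivity along walks in the observed induced subgraph
  have key : ∀ (a b : {i : Fin n | (i : ℕ) < nP}),
      (G.induce {i : Fin n | (i : ℕ) < nP}).Walk a b →
      (∃ m, ∀ m' ≥ m, 0 < (P ^ m') (b : Fin n) v0) →
      ∃ m, ∀ m' ≥ m, 0 < (P ^ m') (a : Fin n) v0 := by
    intro a b p
    induction p with
    | nil => exact fun h => h
    | cons h q ih =>
        intro hb
        obtain ⟨m, hm⟩ := ih hb
        refine ⟨m + 1, fun m' hm' => ?_⟩
        obtain ⟨m'', rfl⟩ : ∃ m'', m' = m'' + 1 := ⟨m' - 1, by omega⟩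
        rename_i a' b' _
        have hadj : G.Adj (a' : Fin n) (b' : Fin n) := h
        exact pow_pos_step hP0 (hPadjpos a' b' a'.2 b'.2 hadj) (hm m'' (by omega))
  have hQ' : ∀ j : Fin n, ∃ m, ∀ m' ≥ m, ((j:ℕ) < nP → 0 < (P ^ m') j v0) := by
    intro j
    by_cases hj : (j:ℕ) < nP
    · obtain ⟨p⟩ := hsub.preconnected ⟨j, hj⟩ ⟨v0, hv0P⟩
      obtain ⟨m, hm⟩ := key ⟨j, hj⟩ ⟨v0, hv0P⟩ p ⟨0, fun m' _ => hbase m'⟩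
      exact ⟨m, fun m' h _ => hm m' h⟩
    · exact ⟨0, fun m' _ h => absurd h hj⟩
  choose f hf using hQ'
  set Mx : ℕ := Finset.univ.sup f + 1 with hMxdef
  have hMx1 : 1 ≤ Mx := by omega
  have hglob : ∀ i : Fin n, 0 < (P ^ Mx) i v0 := by
    intro i
    by_cases hi : (i:ℕ) < nP
    · exact hf i Mx
        (le_trans (Finset.le_sup (Finset.mem_univ i)) (Nat.le_succ _)) hi
    · obtain ⟨j, hj, hPij⟩ := hPexists i
      rw [hMxdef]
      exact pow_pos_step hP0 hPij (hf j _ (Finset.le_sup (Finset.mem_univ j)) hj)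
  -- the contraction coefficient
  set Qm : Matrix (Fin n) (Fin n) ℝ := P ^ Mx with hQmdef
  have hQm0 : ∀ i j, 0 ≤ Qm i j := pow_nonneg_entries hP0 Mx
  have hQmrow : ∀ i, ∑ j, Qm i j = 1 := pow_rowsum hProw Mx
  have hne : (Finset.univ : Finset (Fin n)).Nonempty := ⟨v0, Finset.mem_univ v0⟩
  set δ : ℝ := Finset.univ.inf' hne (fun i => Qm i v0) with hδdef
  have hδpos : 0 < δ := by
    rw [hδdef, Finset.lt_inf'_iff]
    exact fun i _ => hglob i
  have hδle : ∀ i, δ ≤ Qm i v0 := fun i => Finset.inf'_le _ (Finset.mem_univ i)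
  have hδ1 : δ ≤ 1 := by
    have h1 : Qm v0 v0 ≤ ∑ j, Qm v0 j :=
      Finset.single_le_sum (fun j _ => hQm0 v0 j) (Finset.mem_univ v0)
    have h2 := hδle v0
    rw [hQmrow v0] at h1
    linarith
  -- the simplified dynamics
  have hβ1 : Matrix.diagonal β = 1 := by
    have : β = fun _ => (1:ℝ) := funext hβ
    rw [this, Matrix.diagonal_one]
  have hrec' : ∀ t, x (t + 1) = P *ᵥ x t := by
    intro t
    rw [hrec t, hβ1, sub_self, Matrix.zero_mulVec, Matrix.one_mulVec, zero_add,
      Matrix.mulVec_mulVec]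
  have hstep : ∀ t m, x (t + m) = (P ^ m) *ᵥ x t := by
    intro t m
    induction m with
    | zero => simp [Matrix.one_mulVec]
    | succ m ih =>
        have : t + (m + 1) = (t + m) + 1 := by ring
        rw [this, hrec' (t + m), ih, Matrix.mulVec_mulVec, ← pow_succ']
  -- max/min sequences
  set s : ℕ → ℝ := fun t => Finset.univ.sup' hne (x t) with hsdef
  set mm : ℕ → ℝ := fun t => Finset.univ.inf' hne (x t) with hmmdef
  have hxle : ∀ t i, x t i ≤ s t := fun t i => Finset.le_sup' (x t) (Finset.mem_univ i)
  have hlex : ∀ t i, mm t ≤ x t i := fun t i => Finset.inf'_le (x t) (Finset.mem_univ i)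
  have hs_succ : ∀ t, s (t+1) ≤ s t := by
    intro t
    apply Finset.sup'_le
    intro i _
    rw [hrec' t]
    exact mulVec_le_of_rowsum P hP0 hProw (hxle t) i
  have hm_succ : ∀ t, mm t ≤ mm (t+1) := by
    intro t
    apply Finset.le_inf'
    intro i _
    rw [hrec' t]
    exact le_mulVec_of_rowsum P hP0 hProw (hlex t) i
  have hs_anti : Antitone s := antitone_nat_of_succ_le hs_succ
  have hm_mono : Monotone mm := monotone_nat_of_le_succ hm_succ
  have hms : ∀ t, mm t ≤ s t := fun t => le_trans (hlex t v0) (hxle t v0)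
  have hsbdd : BddBelow (Set.range s) := by
    refine ⟨mm 0, ?_⟩
    rintro y ⟨t, rfl⟩
    exact le_trans (hm_mono (Nat.zero_le t)) (hms t)
  have hmbdd : BddAbove (Set.range mm) := by
    refine ⟨s 0, ?_⟩
    rintro y ⟨t, rfl⟩
    exact le_trans (hms t) (hs_anti (Nat.zero_le t))
  have hsL : Tendsto s atTop (𝓝 (⨅ t, s t)) := tendsto_atTop_ciInf hs_anti hsbdd
  have hmL : Tendsto mm atTop (𝓝 (⨆ t, mm t)) := tendsto_atTop_ciSup hm_mono hmbdd
  set L : ℝ := ⨅ t, s t with hLdef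
  set L' : ℝ := ⨆ t, mm t with hL'def
  -- the contraction estimate
  have hosc : ∀ t, s (t + Mx) - mm (t + Mx) ≤ (1 - δ) * (s t - mm t) := by
    intro t
    have hxM : x (t + Mx) = Qm *ᵥ x t := hstep t Mx
    have hup : s (t + Mx) ≤ s t - δ * (s t - x t v0) := by
      apply Finset.sup'_le
      intro i _
      rw [hxM]
      exact mulVec_le_contract Qm hQm0 hQmrow (hxle t) i (hδle i)
    have hlo : mm t + δ * (x t v0 - mm t) ≤ mm (t + Mx) := by
      apply Finset.le_inf'
      intro i _
      rw [hxM]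
      exact le_mulVec_contract Qm hQm0 hQmrow (hlex t) i (hδle i)
    nlinarith
  -- limits coincide
  have hLL' : L = L' := by
    have hdL : Tendsto (fun t => s t - mm t) atTop (𝓝 (L - L')) := hsL.sub hmL
    have hsubk : Tendsto (fun k : ℕ => k * Mx) atTop atTop := by
      apply Filter.tendsto_atTop_atTop.2
      intro b
      exact ⟨b, fun a ha => le_trans ha (Nat.le_mul_of_pos_right a (by omega))⟩
    have hdLk : Tendsto (fun k : ℕ => s (k * Mx) - mm (k * Mx)) atTop (𝓝 (L - L')) :=
      hdL.comp hsubk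
    have hgeo : ∀ k : ℕ, s (k * Mx) - mm (k * Mx) ≤ (1 - δ)^k * (s 0 - mm 0) := by
      intro k
      induction k with
      | zero => simp
      | succ k ih =>
          have h1 : (k+1)*Mx = k*Mx + Mx := by ring
          rw [h1]
          calc s (k*Mx + Mx) - mm (k*Mx+Mx) ≤ (1-δ)*(s (k*Mx) - mm (k*Mx)) := hosc _
            _ ≤ (1-δ)*((1-δ)^k*(s 0 - mm 0)) :=
                mul_le_mul_of_nonneg_left ih (by linarith)
            _ = (1-δ)^(k+1)*(s 0 - mm 0) := by ring
    have hgeo0 : Tendsto (fun k : ℕ => (1-δ)^k * (s 0 - mm 0)) atTop (𝓝 0) := by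
      have h := tendsto_pow_atTop_nhds_zero_of_lt_one
        (by linarith : (0:ℝ) ≤ 1 - δ) (by linarith : 1 - δ < 1)
      simpa using h.mul_const (s 0 - mm 0)
    have h0 : Tendsto (fun k : ℕ => s (k*Mx) - mm (k*Mx)) atTop (𝓝 0) :=
      tendsto_of_tendsto_of_tendsto_of_le_of_le tendsto_const_nhds hgeo0
        (fun k => by linarith [hms (k*Mx)]) (fun k => hgeo k)
    have huniq := tendsto_nhds_unique hdLk h0
    linarith
  -- coordinatewise convergence and conclusion
  have hmLL : Tendsto mm atTop (𝓝 L) := by rw [hLL']; exact hmL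
  have hcoord : ∀ i, Tendsto (fun t => x t i) atTop (𝓝 L) := fun i =>
    tendsto_of_tendsto_of_tendsto_of_le_of_le hmLL hsL (fun t => hlex t i) (fun t => hxle t i)
  refine ⟨fun _ => L, ?_, L, ⟨?_, ?_⟩, fun i => rfl⟩
  · rw [tendsto_pi_nhds]
    exact fun i => hcoord i
  · have h0m : (0:ℝ) ≤ mm 0 := by
      apply Finset.le_inf'
      intro i _
      rw [hx0]
      exact (hx i).1
    have hm0L : mm 0 ≤ L' := le_ciSup hmbdd 0
    rw [hLL']
    linarith
  · have hs0 : s 0 ≤ 1 := by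
      apply Finset.sup'_le
      intro i _
      rw [hx0]
      exact (hx i).2
    have hLs0 : L ≤ s 0 := ciInf_le hsbdd 0
    linarith
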